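/- For every λ > 0, the real part of ∫₀^∞ e^{−iλu³/6}/(1 + u²) du is strictly positive. -/

import Mathlib

open Real Complex

open MeasureTheory Set Filter Topology

noncomputable def FF (l u : ℝ) : ℝ :=
  Real.sin (l*u^3/6) * (2/(l*(u^2+u^4)))
    + (1 - Real.cos (l*u^3/6)) * (8*(1+2*u^2)/(l^2*(u^5*(1+u^2)^2)))

noncomputable def Fd (l u : ℝ) : ℝ :=
  Real.cos (l*u^3/6)/(1+u^2)
    - (1 - Real.cos (l*u^3/6)) * (8*(5+20*u^2+29*u^4+14*u^6)/(l^2*(u^6*(1+u^2)^4)))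

lemma hasDerivAt_FF (l : ℝ) (hl : l ≠ 0) (u : ℝ) (hu : 0 < u) :
    HasDerivAt (FF l) (Fd l u) u := by
  have hu' : u ≠ 0 := hu.ne'
  have h1 : (1:ℝ) + u^2 ≠ 0 := by positivity
  have hd1 : l*(u^2+u^4) ≠ 0 := by
    apply mul_ne_zero hl; nlinarith [sq_nonneg u, pow_pos hu 4, pow_pos hu 2]
  have hd2 : l^2*(u^5*(1+u^2)^2) ≠ 0 := by positivity
  have hphase : HasDerivAt (fun u : ℝ => l*u^3/6) (l*(3*u^2)/6) u := by
    simpa using ((hasDerivAt_pow 3 u).const_mul l).div_const 6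
  have hsin : HasDerivAt (fun u : ℝ => Real.sin (l*u^3/6))
      (Real.cos (l*u^3/6) * (l*(3*u^2)/6)) u :=
    (Real.hasDerivAt_sin _).comp u hphase
  have hcos : HasDerivAt (fun u : ℝ => 1 - Real.cos (l*u^3/6))
      (Real.sin (l*u^3/6) * (l*(3*u^2)/6)) u := by
    simpa using (((Real.hasDerivAt_cos _).comp u hphase).const_sub 1)
  have hden1 : HasDerivAt (fun u : ℝ => l*(u^2+u^4)) (l*(2*u+4*u^3)) u := by
    have : HasDerivAt (fun u : ℝ => u^2+u^4) (2*u+4*u^3) u := by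
      simpa using (hasDerivAt_pow 2 u).fun_add (hasDerivAt_pow 4 u)
    simpa [mul_comm] using this.const_mul l
  have hh : HasDerivAt (fun u : ℝ => 2/(l*(u^2+u^4)))
      ((0 * (l*(u^2+u^4)) - 2 * (l*(2*u+4*u^3)))/(l*(u^2+u^4))^2) u :=
    (hasDerivAt_const u 2).div hden1 hd1
  have hden2 : HasDerivAt (fun u : ℝ => l^2*(u^5*(1+u^2)^2))
      (l^2*(5*u^4*(1+u^2)^2 + u^5*(2*(1+u^2)*(2*u)))) u := by
    have h5 : HasDerivAt (fun u : ℝ => u^5) (5*u^4) u := by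
      simpa using hasDerivAt_pow 5 u
    have hsq : HasDerivAt (fun u : ℝ => (1+u^2)^2) (2*(1+u^2)*(2*u)) u := by
      have : HasDerivAt (fun u : ℝ => 1+u^2) (2*u) u := by
        simpa using (hasDerivAt_pow 2 u).const_add 1
      simpa [mul_comm, mul_assoc] using (this.fun_pow 2)
    simpa [mul_comm, mul_assoc, mul_left_comm] using ((h5.mul hsq).const_mul (l^2))
  have hnum : HasDerivAt (fun u : ℝ => 8*(1+2*u^2)) (8*(4*u)) u := by
    have h : HasDerivAt (fun u : ℝ => 1+2*u^2) (4*u) u := by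
      have h2 := ((hasDerivAt_pow 2 u).const_mul (2:ℝ)).const_add (1:ℝ)
      exact h2.congr_deriv (by norm_num; ring)
    simpa using h.const_mul (8:ℝ)
  have hp : HasDerivAt (fun u : ℝ => 8*(1+2*u^2)/(l^2*(u^5*(1+u^2)^2)))
      ((8*(4*u) * (l^2*(u^5*(1+u^2)^2)) - 8*(1+2*u^2) *
        (l^2*(5*u^4*(1+u^2)^2 + u^5*(2*(1+u^2)*(2*u)))))/(l^2*(u^5*(1+u^2)^2))^2) u :=
    hnum.div hden2 hd2
  have := (hsin.mul hh).add (hcos.mul hp)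
  refine this.congr_deriv ?_
  have hpow : (2:ℝ)*u = 2*u^1 := by ring
  rw [Fd]
  field_simp
  ring

noncomputable def GQ (l u : ℝ) : ℝ :=
  (1 - Real.cos (l*u^3/6)) * (8*(5+20*u^2+29*u^4+14*u^6)/(l^2*(u^6*(1+u^2)^4)))

-- limit of FF at infinity
lemma FF_tendsto_atTop (l : ℝ) (hl : 0 < l) : Tendsto (FF l) atTop (𝓝 0) := by
  apply squeeze_zero_norm' (a := fun u => (2/l + 48/l^2) * u⁻¹)
  · filter_upwards [eventually_ge_atTop (1:ℝ)] with u hu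
    have hu0 : (0:ℝ) < u := lt_of_lt_of_le one_pos hu
    have h1 : |Real.sin (l*u^3/6) * (2/(l*(u^2+u^4)))| ≤ (2/l) * u⁻¹ := by
      rw [abs_mul]
      have hs : |Real.sin (l*u^3/6)| ≤ 1 := Real.abs_sin_le_one _
      have hden : l * u ≤ l*(u^2+u^4) := by
        have : u ≤ u^2+u^4 := by nlinarith
        exact mul_le_mul_of_nonneg_left this hl.le
      have hpos : (0:ℝ) < l * u := by positivity
      have : |2/(l*(u^2+u^4))| = 2/(l*(u^2+u^4)) := by
        rw [_root_.abs_of_nonneg]; positivity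
      rw [this]
      calc |Real.sin (l*u^3/6)| * (2/(l*(u^2+u^4)))
          ≤ 1 * (2/(l*(u^2+u^4))) := by
            apply mul_le_mul_of_nonneg_right hs; positivity
        _ ≤ 2/(l*u) := by
            rw [one_mul]; exact div_le_div_of_nonneg_left (by norm_num) hpos hden
        _ = (2/l) * u⁻¹ := by field_simp
    have h2 : |(1 - Real.cos (l*u^3/6)) * (8*(1+2*u^2)/(l^2*(u^5*(1+u^2)^2)))|
        ≤ (48/l^2) * u⁻¹ := by
      rw [abs_mul]
      have hg : |1 - Real.cos (l*u^3/6)| ≤ 2 := by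
        have := Real.neg_one_le_cos (l*u^3/6)
        have := Real.cos_le_one (l*u^3/6)
        rw [abs_le]; constructor <;> linarith
      have habs : |8*(1+2*u^2)/(l^2*(u^5*(1+u^2)^2))| = 8*(1+2*u^2)/(l^2*(u^5*(1+u^2)^2)) := by
        rw [_root_.abs_of_nonneg]; positivity
      rw [habs]
      have key : 8*(1+2*u^2)/(l^2*(u^5*(1+u^2)^2)) ≤ 24/(l^2*u) := by
        rw [div_le_div_iff₀ (by positivity) (by positivity)]
        have key0 : 8*(1+2*u^2)*u ≤ 24*(u^5*(1+u^2)^2) := by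
          have t1 : 0 ≤ (u^4 - 1) * u :=
            mul_nonneg (sub_nonneg.2 (one_le_pow₀ hu)) hu0.le
          have t2 : 0 ≤ (u^4 - 1) * u^3 :=
            mul_nonneg (sub_nonneg.2 (one_le_pow₀ hu)) (by positivity)
          nlinarith [pow_pos hu0 5, pow_pos hu0 7, pow_pos hu0 9, sq_nonneg u]
        calc 8*(1+2*u^2)*(l^2*u) = l^2 * (8*(1+2*u^2)*u) := by ring
          _ ≤ l^2 * (24*(u^5*(1+u^2)^2)) := by
              exact mul_le_mul_of_nonneg_left key0 (sq_nonneg l)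
          _ = 24*(l^2*(u^5*(1+u^2)^2)) := by ring
      calc |1 - Real.cos (l*u^3/6)| * (8*(1+2*u^2)/(l^2*(u^5*(1+u^2)^2)))
          ≤ 2 * (24/(l^2*u)) := by
            apply mul_le_mul hg key (by positivity) (by norm_num)
        _ = (48/l^2) * u⁻¹ := by field_simp; ring
    calc ‖FF l u‖ ≤ |Real.sin (l*u^3/6) * (2/(l*(u^2+u^4)))|
        + |(1 - Real.cos (l*u^3/6)) * (8*(1+2*u^2)/(l^2*(u^5*(1+u^2)^2)))| := abs_add_le _ _
      _ ≤ (2/l) * u⁻¹ + (48/l^2) * u⁻¹ := add_le_add h1 h2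
      _ = (2/l + 48/l^2) * u⁻¹ := by ring
  · have := tendsto_inv_atTop_zero.const_mul (2/l + 48/l^2)
    rw [mul_zero] at this; exact this

-- limit of FF at 0+
lemma FF_tendsto_zero (l : ℝ) (hl : 0 < l) : Tendsto (FF l) (𝓝[>] (0:ℝ)) (𝓝 0) := by
  apply squeeze_zero_norm' (a := fun u => u)
  · filter_upwards [Ioc_mem_nhdsGT_of_mem (Set.mem_Ico.2 ⟨le_refl (0:ℝ), one_pos⟩)] with u hu
    obtain ⟨hu0, hu1⟩ := hu
    have hx0 : (0:ℝ) ≤ l*u^3/6 := by positivity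
    have h1 : |Real.sin (l*u^3/6) * (2/(l*(u^2+u^4)))| ≤ u/2 := by
      rw [abs_mul]
      have hs : |Real.sin (l*u^3/6)| ≤ l*u^3/6 := by
        calc |Real.sin (l*u^3/6)| ≤ |l*u^3/6| := Real.abs_sin_le_abs
          _ = l*u^3/6 := _root_.abs_of_nonneg hx0
      have habs : |2/(l*(u^2+u^4))| = 2/(l*(u^2+u^4)) := by
        rw [_root_.abs_of_nonneg]; positivity
      rw [habs]
      calc |Real.sin (l*u^3/6)| * (2/(l*(u^2+u^4)))
          ≤ (l*u^3/6) * (2/(l*(u^2+u^4))) := by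
            apply mul_le_mul_of_nonneg_right hs; positivity
        _ = u/(3*(1+u^2)) := by field_simp; ring
        _ ≤ u/2 := by
            apply div_le_div_of_nonneg_left hu0.le (by norm_num)
            nlinarith
    have h2 : |(1 - Real.cos (l*u^3/6)) * (8*(1+2*u^2)/(l^2*(u^5*(1+u^2)^2)))| ≤ u/2 := by
      rw [abs_mul]
      have hg : |1 - Real.cos (l*u^3/6)| ≤ (l*u^3/6)^2/2 := by
        rw [_root_.abs_of_nonneg (by linarith [Real.cos_le_one (l*u^3/6)])]
        linarith [Real.one_sub_sq_div_two_le_cos (x := l*u^3/6)]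
      have habs : |8*(1+2*u^2)/(l^2*(u^5*(1+u^2)^2))| = 8*(1+2*u^2)/(l^2*(u^5*(1+u^2)^2)) := by
        rw [_root_.abs_of_nonneg]; positivity
      rw [habs]
      calc |1 - Real.cos (l*u^3/6)| * (8*(1+2*u^2)/(l^2*(u^5*(1+u^2)^2)))
          ≤ ((l*u^3/6)^2/2) * (8*(1+2*u^2)/(l^2*(u^5*(1+u^2)^2))) := by
            apply mul_le_mul_of_nonneg_right hg; positivity
        _ = u*(1+2*u^2)/(9*(1+u^2)^2) := by field_simp; ring
        _ ≤ u/2 := by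
            rw [div_le_div_iff₀ (by positivity) (by norm_num)]
            nlinarith [sq_nonneg u, sq_nonneg (u^2), pow_le_one₀ hu0.le hu1 (n := 2)]
    calc ‖FF l u‖ ≤ _ + _ := abs_add_le _ _
      _ ≤ u/2 + u/2 := add_le_add h1 h2
      _ = u := by ring
  · exact tendsto_id.mono_left nhdsWithin_le_nhds

lemma integrableOn_cosw (l : ℝ) :
    IntegrableOn (fun u : ℝ => Real.cos (l*u^3/6)/(1+u^2)) (Ioi 0) := by
  apply Integrable.mono (g := fun x : ℝ => (1+x^2)⁻¹)
    (integrable_inv_one_add_sq.restrict (μ := volume) (s := Ioi 0))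
  · apply Continuous.aestronglyMeasurable
    apply Continuous.div (by fun_prop) (by fun_prop)
    intro u; positivity
  · filter_upwards with u
    have h2 : (0:ℝ) < 1 + u^2 := by positivity
    simp only [Real.norm_eq_abs]
    rw [abs_div, _root_.abs_of_pos h2, _root_.abs_of_pos (inv_pos.2 h2), div_le_iff₀ h2,
      inv_mul_cancel₀ h2.ne']
    exact Real.abs_cos_le_one _

lemma GQ_nonneg (l : ℝ) {u : ℝ} (hu : 0 < u) : 0 ≤ GQ l u := by
  have h1 : 0 ≤ 1 - Real.cos (l*u^3/6) := by linarith [Real.cos_le_one (l*u^3/6)]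
  have h2 : 0 ≤ 8*(5+20*u^2+29*u^4+14*u^6)/(l^2*(u^6*(1+u^2)^4)) := by positivity
  exact mul_nonneg h1 h2

lemma GQ_le (l : ℝ) (hl : 0 < l) {u : ℝ} (hu : 0 < u) :
    GQ l u ≤ (29/9) * (1+u^2)⁻¹ := by
  have hu' : u ≠ 0 := hu.ne'
  have hq : (0:ℝ) ≤ 8*(5+20*u^2+29*u^4+14*u^6)/(l^2*(u^6*(1+u^2)^4)) := by positivity
  have hgle : 1 - Real.cos (l*u^3/6) ≤ (l*u^3/6)^2/2 := by
    linarith [Real.one_sub_sq_div_two_le_cos (x := l*u^3/6)]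
  calc GQ l u ≤ ((l*u^3/6)^2/2) * (8*(5+20*u^2+29*u^4+14*u^6)/(l^2*(u^6*(1+u^2)^4))) :=
        mul_le_mul_of_nonneg_right hgle hq
    _ = (5+20*u^2+29*u^4+14*u^6)/(9*(1+u^2)^4) := by
        field_simp; ring
    _ ≤ (29*(1+u^2)^3)/(9*(1+u^2)^4) := by
        gcongr
        nlinarith [sq_nonneg u, sq_nonneg (u^2), sq_nonneg (u^3), pow_nonneg (sq_nonneg u) 2]
    _ = (29/9) * (1+u^2)⁻¹ := by
        have : (0:ℝ) < 1 + u^2 := by positivity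
        field_simp

lemma integrableOn_GQ (l : ℝ) (hl : 0 < l) : IntegrableOn (GQ l) (Ioi 0) := by
  apply Integrable.mono (g := fun x : ℝ => 29/9 * (1+x^2)⁻¹)
    ((integrable_inv_one_add_sq.const_mul (29/9)).restrict (μ := volume) (s := Ioi 0))
  · apply ContinuousOn.aestronglyMeasurable _ measurableSet_Ioi
    apply ContinuousOn.mul (by fun_prop)
    apply ContinuousOn.div (by fun_prop) (by fun_prop)
    intro u hu
    have hu0 : (0:ℝ) < u := hu
    positivity
  · rw [ae_restrict_iff' measurableSet_Ioi]
    filter_upwards with u hu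
    have hu0 : (0:ℝ) < u := hu
    rw [Real.norm_eq_abs, Real.norm_eq_abs, _root_.abs_of_nonneg (GQ_nonneg l hu0),
      _root_.abs_of_nonneg (by positivity : (0:ℝ) ≤ 29/9 * (1+u^2)⁻¹)]
    exact GQ_le l hl hu0

lemma integral_Fd_eq_zero (l : ℝ) (hl : 0 < l) : ∫ u in Ioi (0:ℝ), Fd l u = 0 := by
  have hFd_int : IntegrableOn (Fd l) (Ioi 0) := by
    have heq : Fd l = fun u => Real.cos (l*u^3/6)/(1+u^2) - GQ l u := rfl
    rw [heq]
    exact (integrableOn_cosw l).sub (integrableOn_GQ l hl)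
  have h0 : FF l 0 = 0 := by simp [FF]
  have hcont : ContinuousWithinAt (FF l) (Ici 0) 0 := by
    rw [ContinuousWithinAt, h0, ← Set.Ioi_insert, nhdsWithin_insert, tendsto_sup]
    refine ⟨?_, FF_tendsto_zero l hl⟩
    have := tendsto_pure_nhds (FF l) 0
    rwa [h0] at this
  have := integral_Ioi_of_hasDerivAt_of_tendsto hcont
    (fun x hx => hasDerivAt_FF l hl.ne' x hx) hFd_int (FF_tendsto_atTop l hl)
  rw [this, h0, sub_zero]

lemma integral_GQ_pos (l : ℝ) (hl : 0 < l) : 0 < ∫ u in Ioi (0:ℝ), GQ l u := by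
  have hπ := Real.pi_pos
  set a := (3*π/l) ^ ((1:ℝ)/3) with ha_def
  set b := (9*π/l) ^ ((1:ℝ)/3) with hb_def
  have ha0 : 0 < a := Real.rpow_pos_of_pos (by positivity) _
  have hb0 : 0 < b := Real.rpow_pos_of_pos (by positivity) _
  have h39 : 3*π/l < 9*π/l := by
    rw [div_lt_div_iff₀ hl hl]; nlinarith
  have ha3 : a^3 = 3*π/l := by
    rw [ha_def, ← Real.rpow_natCast ((3*π/l) ^ ((1:ℝ)/3)) 3, ← Real.rpow_mul (by positivity)]
    norm_num
  have hb3 : b^3 = 9*π/l := by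
    rw [hb_def, ← Real.rpow_natCast ((9*π/l) ^ ((1:ℝ)/3)) 3, ← Real.rpow_mul (by positivity)]
    norm_num
  have hab : a < b := by
    by_contra hba
    push_neg at hba
    have := pow_le_pow_left₀ hb0.le hba 3
    rw [ha3, hb3] at this; linarith
  set C := 40/(l^2*(b^6*(1+b^2)^4)) with hC_def
  have hC : 0 < C := by positivity
  have key : ∀ u ∈ Ioc a b, C ≤ GQ l u := by
    rintro u ⟨hua, hub⟩
    have hu0 : 0 < u := lt_trans ha0 hua
    have hu3a : 3*π/l ≤ u^3 := by
      rw [← ha3]; exact pow_le_pow_left₀ ha0.le hua.le 3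
    have hu3b : u^3 ≤ 9*π/l := by
      rw [← hb3]; exact pow_le_pow_left₀ hu0.le hub 3
    have hA : 3*π ≤ u^3 * l := (div_le_iff₀ hl).1 hu3a
    have hB : u^3 * l ≤ 9*π := (le_div_iff₀ hl).1 hu3b
    have hcos : Real.cos (l*u^3/6) ≤ 0 := by
      apply Real.cos_nonpos_of_pi_div_two_le_of_le <;> nlinarith
    have h1 : (1:ℝ) ≤ 1 - Real.cos (l*u^3/6) := by linarith
    have hqC : C ≤ 8*(5+20*u^2+29*u^4+14*u^6)/(l^2*(u^6*(1+u^2)^4)) := by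
      have hden : l^2*(u^6*(1+u^2)^4) ≤ l^2*(b^6*(1+b^2)^4) := by
        apply mul_le_mul_of_nonneg_left _ (sq_nonneg l)
        apply mul_le_mul (pow_le_pow_left₀ hu0.le hub 6)
          (pow_le_pow_left₀ (by positivity) (by nlinarith [pow_le_pow_left₀ hu0.le hub 2]) 4)
          (by positivity) (by positivity)
      calc C ≤ 40/(l^2*(u^6*(1+u^2)^4)) :=
            div_le_div_of_nonneg_left (by norm_num) (by positivity) hden
        _ ≤ 8*(5+20*u^2+29*u^4+14*u^6)/(l^2*(u^6*(1+u^2)^4)) := by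
            gcongr
            nlinarith [sq_nonneg u, sq_nonneg (u^2), sq_nonneg (u^3)]
    calc C ≤ 8*(5+20*u^2+29*u^4+14*u^6)/(l^2*(u^6*(1+u^2)^4)) := hqC
      _ ≤ GQ l u := le_mul_of_one_le_left (by positivity) h1
  have hsub : Ioc a b ⊆ Ioi (0:ℝ) := fun x hx => lt_trans ha0 hx.1
  have h1 : ∫ u in Ioc a b, GQ l u ≤ ∫ u in Ioi 0, GQ l u := by
    apply setIntegral_mono_set (integrableOn_GQ l hl)
    · filter_upwards [ae_restrict_mem measurableSet_Ioi] with u hu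
      exact GQ_nonneg l hu
    · exact HasSubset.Subset.eventuallyLE hsub
  have h2 : C * (b - a) ≤ ∫ u in Ioc a b, GQ l u := by
    have hint : IntegrableOn (GQ l) (Ioc a b) :=
      (integrableOn_GQ l hl).mono_set hsub
    have := setIntegral_mono_on (integrableOn_const measure_Ioc_lt_top.ne)
      hint measurableSet_Ioc key
    rwa [setIntegral_const, Real.volume_real_Ioc_of_le hab.le,
      smul_eq_mul, mul_comm] at this
  have h3 : 0 < C * (b - a) := mul_pos hC (by linarith)
  linarith

lemma integrableOn_Fd (l : ℝ) (hl : 0 < l) : IntegrableOn (Fd l) (Ioi 0) := by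
  have heq : Fd l = fun u => Real.cos (l*u^3/6)/(1+u^2) - GQ l u := rfl
  rw [heq]
  exact (integrableOn_cosw l).sub (integrableOn_GQ l hl)

theorem oscillatory_integral_re_pos (lam : ℝ) (hlam : 0 < lam) :
    0 < (∫ u in Set.Ioi (0:ℝ),
        Complex.exp (-Complex.I * lam * u ^ 3 / 6) / (1 + (u:ℂ) ^ 2)).re := by

  have hrot : ∀ u : ℝ, -Complex.I * lam * u ^ 3 / 6 = ((-(lam*u^3/6) : ℝ) : ℂ) * Complex.I := by
    intro u; push_cast; ring
  have hden : ∀ u : ℝ, (1 + (u:ℂ)^2) = ((1 + u^2 : ℝ) : ℂ) := by intro u; push_cast; ring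
  have hint : IntegrableOn (fun u : ℝ =>
      Complex.exp (-Complex.I * lam * u ^ 3 / 6) / (1 + (u:ℂ) ^ 2)) (Set.Ioi 0) := by
    apply Integrable.mono (g := fun x : ℝ => (1+x^2)⁻¹)
      (integrable_inv_one_add_sq.restrict (μ := volume) (s := Ioi 0))
    · apply Continuous.aestronglyMeasurable
      apply Continuous.div (by fun_prop) (by fun_prop)
      intro u
      rw [hden u, Ne, Complex.ofReal_eq_zero]
      positivity
    · filter_upwards with u
      have h2 : (0:ℝ) < 1 + u^2 := by positivity
      rw [norm_div, hrot u, hden u, 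
        Complex.norm_exp_ofReal_mul_I, Complex.norm_real, Real.norm_eq_abs, _root_.abs_of_pos h2,
        Real.norm_eq_abs, _root_.abs_of_pos (inv_pos.2 h2), one_div]
  have hre := integral_re (μ := volume.restrict (Set.Ioi 0)) hint
  simp only [RCLike.re_to_complex] at hre
  rw [← hre]
  have heq : ∫ u in Set.Ioi (0:ℝ),
      (Complex.exp (-Complex.I * lam * u ^ 3 / 6) / (1 + (u:ℂ) ^ 2)).re
      = ∫ u in Set.Ioi (0:ℝ), Real.cos (lam*u^3/6)/(1+u^2) := by
    apply setIntegral_congr_fun measurableSet_Ioi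
    intro u _
    simp only [hrot u, hden u, Complex.div_ofReal_re, Complex.exp_ofReal_mul_I_re, Real.cos_neg]
  rw [heq]
  have hsplit : ∀ u : ℝ, Real.cos (lam*u^3/6)/(1+u^2) = Fd lam u + GQ lam u := by
    intro u; simp [Fd, GQ]
  simp only [hsplit]
  rw [integral_add (integrableOn_Fd lam hlam) (integrableOn_GQ lam hlam),
    integral_Fd_eq_zero lam hlam, zero_add]
  exact integral_GQ_pos lam hlam
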